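/- Let G be a bipartite TRVG with partite sets represented by p green rectangles g_1, ..., g_p and q red rectangles r_1, ..., r_q. If g_i sees α_i red rectangles horizontally for each i, then q ≥ α_1 + α_2 + ... + α_p − (p − 1). -/
import Mathlib


structure Rect where
  x1 : ℝ
  x2 : ℝ
  y1 : ℝ
  y2 : ℝ
  hx : x1 < x2
  hy : y1 < y2

def Rect.pts (R : Rect) : Set (ℝ × ℝ) := Set.Icc R.x1 R.x2 ×ˢ Set.Icc R.y1 R.y2

def seesV (R S : Rect) : Prop := (Set.Ioo R.x1 R.x2 ∩ Set.Ioo S.x1 S.x2).Nonempty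

def seesH (R S : Rect) : Prop := (Set.Ioo R.y1 R.y2 ∩ Set.Ioo S.y1 S.y2).Nonempty

def sees (R S : Rect) : Prop := seesV R S ∨ seesH R S

def IsTRVG {V : Type*} (G : SimpleGraph V) : Prop :=
  ∃ f : V → Rect,
    (∀ u v : V, u ≠ v → Disjoint (f u).pts (f v).pts) ∧
    (∀ u v : V, u ≠ v → (G.Adj u v ↔ sees (f u) (f v)))

/-- In a bipartite TRVG representation with p green and q red rectangles, if g_i sees α_i
red rectangles horizontally, then q ≥ α_1 + ⋯ + α_p − (p−1). -/
theorem stmt4 (p q : ℕ) (hp : 0 < p) (g : Fin p → Rect) (r : Fin q → Rect)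
    (hgg : ∀ i j : Fin p, i ≠ j → Disjoint (g i).pts (g j).pts ∧ ¬ sees (g i) (g j))
    (hrr : ∀ i j : Fin q, i ≠ j → Disjoint (r i).pts (r j).pts ∧ ¬ sees (r i) (r j))
    (hgr : ∀ (i : Fin p) (j : Fin q), Disjoint (g i).pts (r j).pts) :
    (q : ℤ) ≥ (∑ i : Fin p, ({j : Fin q | seesH (g i) (r j)}.ncard : ℤ)) - (p - 1) := by
  classical
  -- pairwise disjoint y-intervals of greens
  have hdisjG : ∀ i j : Fin p, i ≠ j →
      Disjoint (Set.Ioo (g i).y1 (g i).y2) (Set.Ioo (g j).y1 (g j).y2) := by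
    intro i j hij
    rcases hgg i j hij with ⟨-, hns⟩
    rw [Set.disjoint_iff_inter_eq_empty]
    by_contra h
    exact hns (Or.inr (Set.nonempty_iff_ne_empty.2 h))
  have hdisjR : ∀ i j : Fin q, i ≠ j →
      Disjoint (Set.Ioo (r i).y1 (r i).y2) (Set.Ioo (r j).y1 (r j).y2) := by
    intro i j hij
    rcases hrr i j hij with ⟨-, hns⟩
    rw [Set.disjoint_iff_inter_eq_empty]
    by_contra h
    exact hns (Or.inr (Set.nonempty_iff_ne_empty.2 h))
  -- distinct greens have distinct y1
  have hy1G : ∀ i j : Fin p, (g i).y1 = (g j).y1 → i = j := by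
    intro i j h
    by_contra hij
    have hd := hdisjG i j hij
    set c := ((g i).y1 + min (g i).y2 (g j).y2) / 2 with hc
    have h1 : (g i).y1 < min (g i).y2 (g j).y2 := lt_min (g i).hy (h ▸ (g j).hy)
    have hc1 : (g i).y1 < c := by rw [hc]; linarith
    have hc2 : c < min (g i).y2 (g j).y2 := by rw [hc]; linarith
    exact Set.disjoint_left.1 hd ⟨hc1, lt_of_lt_of_le hc2 (min_le_left _ _)⟩
      ⟨h ▸ hc1, lt_of_lt_of_le hc2 (min_le_right _ _)⟩
  -- key: if r j sees greens k and i with (g k).y1 < (g i).y1 then (g i).y1 ∈ Ioo (r j)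
  have keyB : ∀ (i k : Fin p) (j : Fin q), seesH (g k) (r j) → seesH (g i) (r j) →
      (g k).y1 < (g i).y1 → (g i).y1 ∈ Set.Ioo (r j).y1 (r j).y2 := by
    intro i k j hk hi hlt
    have hki : k ≠ i := fun h => absurd hlt (by rw [h]; exact lt_irrefl _)
    obtain ⟨a, ⟨ha1, ha2⟩, ha3, ha4⟩ := hk
    obtain ⟨b, ⟨hb1, hb2⟩, hb3, hb4⟩ := hi
    have horder : (g k).y2 ≤ (g i).y1 := by
      by_contra h
      push_neg at h
      have hd := hdisjG k i hki
      set c := ((g i).y1 + min (g k).y2 (g i).y2) / 2 with hc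
      have h1 : (g i).y1 < min (g k).y2 (g i).y2 := lt_min h (g i).hy
      have hc1 : (g i).y1 < c := by rw [hc]; linarith
      have hc2 : c < min (g k).y2 (g i).y2 := by rw [hc]; linarith
      exact Set.disjoint_left.1 hd
        ⟨lt_trans hlt hc1, lt_of_lt_of_le hc2 (min_le_left _ _)⟩
        ⟨hc1, lt_of_lt_of_le hc2 (min_le_right _ _)⟩
    exact ⟨lt_of_lt_of_le (lt_trans ha3 ha2) horder, lt_trans hb1 hb4⟩
  -- the minimal green
  obtain ⟨m, -, hm⟩ := Finset.exists_min_image Finset.univ (fun i => (g i).y1)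
    ⟨⟨0, hp⟩, Finset.mem_univ _⟩
  -- the edge set
  set P : Fin p → Fin q → Prop := fun i j => seesH (g i) (r j) with hP
  set E : Finset (Fin p × Fin q) :=
    Finset.univ.filter (fun ij => P ij.1 ij.2) with hE
  -- the injection
  set φ : Fin p × Fin q → Fin q ⊕ Fin p := fun ij =>
    if ∀ k, P k ij.2 → (g ij.1).y1 ≤ (g k).y1 then Sum.inl ij.2 else Sum.inr ij.1 with hφ
  have hφi : ∀ ij : Fin p × Fin q, φ ij =
      if (∀ k, P k ij.2 → (g ij.1).y1 ≤ (g k).y1) then Sum.inl ij.2 else Sum.inr ij.1 :=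
    fun ij => rfl
  have hmaps : ∀ ij ∈ E, φ ij ∈ (Finset.univ.erase (Sum.inr m) : Finset (Fin q ⊕ Fin p)) := by
    intro ij hij
    rw [Finset.mem_erase]
    refine ⟨?_, Finset.mem_univ _⟩
    rw [hφi]
    by_cases h : ∀ k, P k ij.2 → (g ij.1).y1 ≤ (g k).y1
    · rw [if_pos h]; simp
    · rw [if_neg h]
      simp only [Sum.inr.injEq, ne_eq]
      intro heq
      push_neg at h
      obtain ⟨k, -, hk⟩ := h
      exact absurd (hm k (Finset.mem_univ k)) (by rw [← heq]; exact not_le.2 hk)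
  have hinj : Set.InjOn φ E := by
    intro ij hij ij' hij' heq
    simp only [hE, Finset.mem_coe, Finset.mem_filter, Finset.mem_univ, true_and] at hij hij'
    rw [hφi, hφi] at heq
    by_cases h1 : ∀ k, P k ij.2 → (g ij.1).y1 ≤ (g k).y1 <;>
      by_cases h2 : ∀ k, P k ij'.2 → (g ij'.1).y1 ≤ (g k).y1
    · -- both minimal: inl j = inl j'
      rw [if_pos h1, if_pos h2] at heq
      have hj : ij.2 = ij'.2 := Sum.inl.inj heq
      have hle1 : (g ij.1).y1 ≤ (g ij'.1).y1 := h1 ij'.1 (by rw [hj]; exact hij')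
      have hle2 : (g ij'.1).y1 ≤ (g ij.1).y1 := h2 ij.1 (by rw [← hj]; exact hij)
      exact Prod.ext (hy1G _ _ (le_antisymm hle1 hle2)) hj
    · rw [if_pos h1, if_neg h2] at heq
      exact absurd heq (by simp)
    · rw [if_neg h1, if_pos h2] at heq
      exact absurd heq (by simp)
    · -- both non-minimal: inr i = inr i'
      rw [if_neg h1, if_neg h2] at heq
      have hi : ij.1 = ij'.1 := Sum.inr.inj heq
      by_contra hne
      have hjne : ij.2 ≠ ij'.2 := fun h => hne (Prod.ext hi h)
      push_neg at h1 h2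
      obtain ⟨k, hk1, hk2⟩ := h1
      obtain ⟨k', hk1', hk2'⟩ := h2
      have hmem1 : (g ij.1).y1 ∈ Set.Ioo (r ij.2).y1 (r ij.2).y2 :=
        keyB ij.1 k ij.2 hk1 hij hk2
      have hmem2 : (g ij.1).y1 ∈ Set.Ioo (r ij'.2).y1 (r ij'.2).y2 := by
        rw [hi]
        exact keyB ij'.1 k' ij'.2 hk1' hij' hk2'
      exact Set.disjoint_left.1 (hdisjR _ _ hjne) hmem1 hmem2
  have hcard : E.card ≤ q + p - 1 := by
    calc E.card ≤ (Finset.univ.erase (Sum.inr m) : Finset (Fin q ⊕ Fin p)).card :=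
          Finset.card_le_card_of_injOn φ hmaps hinj
      _ = q + p - 1 := by
          rw [Finset.card_erase_of_mem (Finset.mem_univ _)]
          simp
  have hEc : E.card = ∑ i : Fin p, (Finset.univ.filter (P i)).card := by
    rw [hE, Finset.card_filter, Fintype.sum_prod_type]
    exact Finset.sum_congr rfl (fun i _ => (Finset.card_filter _ _).symm)
  have hsum : (∑ i : Fin p, ({j : Fin q | seesH (g i) (r j)}.ncard : ℤ)) = (E.card : ℤ) := by
    have hnc : ∀ i : Fin p, {j : Fin q | seesH (g i) (r j)}.ncard
        = (Finset.univ.filter (P i)).card := by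
      intro i
      rw [Set.ncard_eq_toFinset_card']
      congr 1
      ext j
      simp [hP]
    simp only [hnc]
    rw [hEc]
    push_cast
    rfl
  rw [hsum, ge_iff_le, sub_le_iff_le_add]
  calc (E.card : ℤ) ≤ ((q + p - 1 : ℕ) : ℤ) := by exact_mod_cast hcard
    _ ≤ (q : ℤ) + ((p : ℤ) - 1) := by
        have h1 : 1 ≤ q + p := by omega
        push_cast [h1]
        ring_nf
        omega
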